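/- arXiv:2402.09380 — 3 statements merged into one kernel-verified Lean document; each statement's English description precedes it below -/
import Mathlib

section
/- Let H be a Hilbert space, Ψ ∈ H, and let (A_Λ) be a net of self-adjoint operators converging to a self-adjoint operator A in the sense that ⟨Ψ, e^{itA_Λ} Ψ⟩ → ⟨Ψ, e^{itA} Ψ⟩ for every t ∈ ℝ. If moreover ⟨Ψ, P_Λ Ψ⟩ ≥ ⟨Ψ, P Ψ⟩ for all Λ, where P_Λ and P are the orthogonal projections onto ker A_Λ and ker A respectively, then lim_Λ ⟨Ψ, P_Λ Ψ⟩ = ⟨Ψ, P Ψ⟩. -/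
open MeasureTheory Filter Topology Finset in
/-- Fejér-type kernel: `‖(1/n) ∑_{j<n} e^{i (j+1) τ s}‖²`. -/
noncomputable def stmt0Kern (τ : ℝ) (n : ℕ) (s : ℝ) : ℝ :=
  ‖(∑ j ∈ Finset.range n,
      Complex.exp (Complex.I * ((((j : ℝ) + 1) * τ : ℝ) : ℂ) * (s : ℂ))) / (n : ℂ)‖ ^ 2

section stmt0Aux

open MeasureTheory Filter Topology Finset

lemma stmt0_norm_exp_I_mul (t s : ℝ) : ‖Complex.exp (Complex.I * (t : ℂ) * (s : ℂ))‖ = 1 := by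
  rw [Complex.norm_exp]
  simp [Complex.exp_re]

lemma stmt0Kern_nonneg (τ : ℝ) (n : ℕ) (s : ℝ) : 0 ≤ stmt0Kern τ n s := sq_nonneg _

lemma stmt0Kern_le_one (τ : ℝ) (n : ℕ) (s : ℝ) : stmt0Kern τ n s ≤ 1 := by
  have h : ‖(∑ j ∈ Finset.range n,
      Complex.exp (Complex.I * ((((j : ℝ) + 1) * τ : ℝ) : ℂ) * (s : ℂ))) / (n : ℂ)‖ ≤ 1 := by
    rcases Nat.eq_zero_or_pos n with hn | hn
    · simp [hn]
    rw [norm_div]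
    rw [div_le_one (by simp; positivity)]
    calc ‖∑ j ∈ Finset.range n,
        Complex.exp (Complex.I * ((((j : ℝ) + 1) * τ : ℝ) : ℂ) * (s : ℂ))‖
        ≤ ∑ j ∈ Finset.range n,
            ‖Complex.exp (Complex.I * ((((j : ℝ) + 1) * τ : ℝ) : ℂ) * (s : ℂ))‖ :=
          norm_sum_le _ _
      _ = n := by simp only [stmt0_norm_exp_I_mul]; simp
      _ ≤ ‖(n : ℂ)‖ := by simp
  calc stmt0Kern τ n s ≤ 1 ^ 2 := by
        rw [stmt0Kern]; exact pow_le_pow_left₀ (norm_nonneg _) h 2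
    _ = 1 := one_pow 2

lemma stmt0Kern_eq_sum (τ : ℝ) (n : ℕ) (s : ℝ) :
    stmt0Kern τ n s = (∑ j ∈ Finset.range n, ∑ k ∈ Finset.range n,
      (Complex.exp (Complex.I * ((((j : ℝ) - (k : ℝ)) * τ : ℝ) : ℂ) * (s : ℂ))).re)
      / (n : ℝ) ^ 2 := by
  have hsq : ∀ w : ℂ, ‖w‖ ^ 2 = (w * (starRingEnd ℂ) w).re := by
    intro w
    rw [Complex.mul_conj]
    rw [Complex.ofReal_re, Complex.normSq_eq_norm_sq]
  rw [stmt0Kern, norm_div, div_pow]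
  congr 1
  · rw [hsq, map_sum, Finset.sum_mul_sum, Complex.re_sum]
    refine Finset.sum_congr rfl fun j _ => ?_
    rw [Complex.re_sum]
    refine Finset.sum_congr rfl fun k _ => ?_
    congr 1
    rw [← Complex.exp_conj, ← Complex.exp_add]
    congr 1
    simp only [map_mul, Complex.conj_I, Complex.conj_ofReal]
    push_cast
    ring
  · simp

lemma stmt0_continuous_exp_I_mul (t : ℝ) :
    Continuous (fun s : ℝ => Complex.exp (Complex.I * (t : ℂ) * (s : ℂ))) := by
  fun_prop

lemma stmt0_integrable_exp_I_mul (t : ℝ) (ν : Measure ℝ) [IsFiniteMeasure ν] :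
    Integrable (fun s : ℝ => Complex.exp (Complex.I * (t : ℂ) * (s : ℂ))) ν := by
  refine Integrable.mono' (integrable_const 1)
    ((stmt0_continuous_exp_I_mul t).aestronglyMeasurable) ?_
  filter_upwards with s
  rw [stmt0_norm_exp_I_mul]

lemma stmt0_continuous_kern (τ : ℝ) (n : ℕ) : Continuous (stmt0Kern τ n) := by
  unfold stmt0Kern
  fun_prop

lemma stmt0_integrable_kern (τ : ℝ) (n : ℕ) (ν : Measure ℝ) [IsFiniteMeasure ν] :
    Integrable (stmt0Kern τ n) ν := by
  refine Integrable.mono' (integrable_const 1)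
    ((stmt0_continuous_kern τ n).aestronglyMeasurable) ?_
  filter_upwards with s
  rw [Real.norm_eq_abs, abs_of_nonneg (stmt0Kern_nonneg τ n s)]
  exact stmt0Kern_le_one τ n s

lemma stmt0Kern_integral (τ : ℝ) (n : ℕ) (ν : Measure ℝ) [IsFiniteMeasure ν] :
    ∫ s, stmt0Kern τ n s ∂ν = (∑ j ∈ Finset.range n, ∑ k ∈ Finset.range n,
      (∫ s : ℝ, Complex.exp (Complex.I * ((((j : ℝ) - (k : ℝ)) * τ : ℝ) : ℂ) * (s : ℂ)) ∂ν).re)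
      / (n : ℝ) ^ 2 := by
  simp_rw [stmt0Kern_eq_sum]
  rw [integral_div]
  congr 1
  rw [integral_finset_sum]
  · refine Finset.sum_congr rfl fun j _ => ?_
    rw [integral_finset_sum]
    · refine Finset.sum_congr rfl fun k _ => ?_
      exact integral_re (stmt0_integrable_exp_I_mul _ ν)
    · exact fun k _ => (stmt0_integrable_exp_I_mul _ ν).re
  · intro j _
    exact integrable_finset_sum _ fun k _ => (stmt0_integrable_exp_I_mul _ ν).re

lemma stmt0_exp_term_eq_pow (τ s : ℝ) (j : ℕ) :
    Complex.exp (Complex.I * ((((j : ℝ) + 1) * τ : ℝ) : ℂ) * (s : ℂ))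
      = Complex.exp (Complex.I * (τ : ℂ) * (s : ℂ)) ^ (j + 1) := by
  rw [← Complex.exp_nat_mul]
  congr 1
  push_cast
  ring

lemma stmt0Kern_of_one (τ s : ℝ) (n : ℕ) (hn : 1 ≤ n)
    (hz : Complex.exp (Complex.I * (τ : ℂ) * (s : ℂ)) = 1) : stmt0Kern τ n s = 1 := by
  rw [stmt0Kern]
  have h1 : ∀ j ∈ Finset.range n,
      Complex.exp (Complex.I * ((((j : ℝ) + 1) * τ : ℝ) : ℂ) * (s : ℂ)) = 1 := by
    intro j _
    rw [stmt0_exp_term_eq_pow, hz, one_pow]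
  have hne : (n : ℂ) ≠ 0 := Nat.cast_ne_zero.mpr (by omega)
  rw [Finset.sum_congr rfl h1, Finset.sum_const, Finset.card_range, nsmul_eq_mul, mul_one,
    div_self hne]
  simp

lemma stmt0Kern_tendsto_zero (τ s : ℝ)
    (hz : Complex.exp (Complex.I * (τ : ℂ) * (s : ℂ)) ≠ 1) :
    Tendsto (fun n => stmt0Kern τ n s) atTop (𝓝 0) := by
  set z := Complex.exp (Complex.I * (τ : ℂ) * (s : ℂ)) with hzdef
  have hznorm : ‖z‖ = 1 := by
    rw [hzdef, Complex.norm_exp]; simp [Complex.exp_re]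
  have hd : 0 < ‖z - 1‖ := by rw [norm_pos_iff]; exact sub_ne_zero.mpr hz
  set C : ℝ := (2 / ‖z - 1‖) ^ 2 with hC
  have hCnn : 0 ≤ C := sq_nonneg _
  have hbound : ∀ n : ℕ, 1 ≤ n → stmt0Kern τ n s ≤ C / n := by
    intro n hn
    have hnpos : (0:ℝ) < n := by exact_mod_cast hn
    have hsum : ∑ j ∈ Finset.range n,
        Complex.exp (Complex.I * ((((j : ℝ) + 1) * τ : ℝ) : ℂ) * (s : ℂ))
        = (∑ j ∈ Finset.range n, z ^ j) * z := by
      rw [Finset.sum_mul]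
      refine Finset.sum_congr rfl fun j _ => ?_
      rw [stmt0_exp_term_eq_pow, pow_succ]
    have hnorm : ‖∑ j ∈ Finset.range n,
        Complex.exp (Complex.I * ((((j : ℝ) + 1) * τ : ℝ) : ℂ) * (s : ℂ))‖ ≤ 2 / ‖z - 1‖ := by
      rw [hsum, norm_mul, hznorm, mul_one, geom_sum_eq hz, norm_div]
      gcongr
      calc ‖z ^ n - 1‖ ≤ ‖z ^ n‖ + ‖(1:ℂ)‖ := norm_sub_le _ _
        _ = 2 := by rw [norm_pow, hznorm]; norm_num
    have h2 : stmt0Kern τ n s ≤ ((2 / ‖z - 1‖) / n) ^ 2 := by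
      rw [stmt0Kern, norm_div, Complex.norm_natCast]
      exact pow_le_pow_left₀ (by positivity) (by gcongr) 2
    refine h2.trans ?_
    rw [div_pow, ← hC]
    have hn1 : (1:ℝ) ≤ (n:ℝ) := by exact_mod_cast hn
    have hn2 : (n : ℝ) ≤ (n : ℝ) ^ 2 := by nlinarith
    gcongr
  refine squeeze_zero' (Eventually.of_forall fun n => stmt0Kern_nonneg τ n s) ?_
    (tendsto_const_div_atTop_nhds_zero_nat C)
  filter_upwards [eventually_ge_atTop 1] with n hn using hbound n hn

lemma stmt0_measure_L (μ : Measure ℝ) (τ : ℝ) (hτ : τ ≠ 0)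
    (hatoms : ∀ k : ℤ, k ≠ 0 → μ {(2 * Real.pi * k / τ : ℝ)} = 0) :
    μ {s : ℝ | Complex.exp (Complex.I * (τ:ℂ) * (s:ℂ)) = 1} = μ {0} := by
  set L := {s : ℝ | Complex.exp (Complex.I * (τ:ℂ) * (s:ℂ)) = 1} with hL
  have h0L : (0:ℝ) ∈ L := by simp [hL]
  have hnull : μ (L \ {0}) = 0 := by
    refine measure_mono_null (t := ⋃ k : ℤ, ({(2 * Real.pi * k / τ : ℝ)} \ {0})) ?_ ?_
    · rintro s ⟨hsL, hs0⟩
      obtain ⟨k, hk⟩ := Complex.exp_eq_one_iff.mp hsL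
      have him := congrArg Complex.im hk
      simp [Complex.mul_im, Complex.mul_re] at him
      have hs : s = 2 * Real.pi * k / τ := by
        field_simp
        linarith [him]
      exact Set.mem_iUnion.mpr ⟨k, by simp [hs], hs0⟩
    · refine measure_iUnion_null fun k => ?_
      rcases eq_or_ne k 0 with hk | hk
      · simp [hk]
      · exact measure_mono_null Set.diff_subset (hatoms k hk)
  apply le_antisymm
  · calc μ L ≤ μ ({0} ∪ (L \ {0})) := by
          refine measure_mono fun s hs => ?_
          by_cases h : s = 0 <;> simp [h, hs]
      _ ≤ μ {0} + μ (L \ {0}) := measure_union_le _ _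
      _ = μ {0} := by rw [hnull, add_zero]
  · exact measure_mono (Set.singleton_subset_iff.mpr h0L)

lemma stmt0_tendsto_integral_kern (μ : Measure ℝ) [IsFiniteMeasure μ] (τ : ℝ) (hτ : τ ≠ 0)
    (hatoms : ∀ k : ℤ, k ≠ 0 → μ {(2 * Real.pi * k / τ : ℝ)} = 0) :
    Tendsto (fun n => ∫ s, stmt0Kern τ n s ∂μ) atTop (𝓝 ((μ {0}).toReal)) := by
  set L := {s : ℝ | Complex.exp (Complex.I * (τ:ℂ) * (s:ℂ)) = 1} with hL
  have hLm : MeasurableSet L := by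
    have h : L = (fun s : ℝ => Complex.exp (Complex.I * (τ:ℂ) * (s:ℂ))) ⁻¹' {1} := by
      ext s; simp [hL]
    rw [h]
    exact (measurableSet_singleton 1).preimage (by fun_prop)
  have hlim : ∀ s : ℝ, Tendsto (fun n => stmt0Kern τ n s) atTop
      (𝓝 (L.indicator (fun _ => (1:ℝ)) s)) := by
    intro s
    by_cases hs : s ∈ L
    · rw [Set.indicator_of_mem hs]
      refine Tendsto.congr' ?_ tendsto_const_nhds
      filter_upwards [eventually_ge_atTop 1] with n hn
      exact (stmt0Kern_of_one τ s n hn hs).symm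
    · rw [Set.indicator_of_notMem hs]
      exact stmt0Kern_tendsto_zero τ s hs
  have key := tendsto_integral_of_dominated_convergence (μ := μ)
    (F := fun n => stmt0Kern τ n) (f := L.indicator (fun _ => (1:ℝ))) (bound := fun _ => 1)
    (fun n => (stmt0_continuous_kern τ n).aestronglyMeasurable)
    (integrable_const 1)
    (fun n => Eventually.of_forall fun s => by
      rw [Real.norm_eq_abs, abs_of_nonneg (stmt0Kern_nonneg τ n s)]
      exact stmt0Kern_le_one τ n s)
    (Eventually.of_forall hlim)
  have hind : ∫ s, L.indicator (fun _ => (1:ℝ)) s ∂μ = (μ {0}).toReal := by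
    rw [show (fun _ => (1:ℝ)) = (1 : ℝ → ℝ) from rfl, integral_indicator_one hLm, measureReal_def,
      stmt0_measure_L μ τ hτ hatoms]
  rwa [hind] at key

lemma stmt0_exists_tau (μ : Measure ℝ) [IsFiniteMeasure μ] :
    ∃ τ : ℝ, 0 < τ ∧ ∀ k : ℤ, k ≠ 0 → μ {(2 * Real.pi * k / τ : ℝ)} = 0 := by
  have hA : Set.Countable {x : ℝ | 0 < μ {x}} := by
    have h := MeasureTheory.Measure.countable_meas_level_set_pos
      (μ := μ) (g := fun x : ℝ => x) measurable_id
    have he : {t : ℝ | 0 < μ {a : ℝ | a = t}} = {x : ℝ | 0 < μ {x}} := by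
      ext t; simp [Set.setOf_eq_eq_singleton]
    rwa [he] at h
  set bad := (fun p : ℤ × ℝ => 2 * Real.pi * (p.1 : ℝ) / p.2) ''
    (Set.univ ×ˢ {x : ℝ | 0 < μ {x}}) with hbad
  have hbadc : bad.Countable := (Set.countable_univ.prod hA).image _
  have hdense : Dense badᶜ := hbadc.dense_compl ℝ
  obtain ⟨τ, hτbad, hτpos⟩ := hdense.exists_mem_open (isOpen_Ioi (a := (0:ℝ)))
    ⟨1, by norm_num⟩
  rw [Set.mem_Ioi] at hτpos
  refine ⟨τ, hτpos, fun k hk => ?_⟩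
  by_contra h
  apply hτbad
  have hx : 0 < μ {(2 * Real.pi * k / τ : ℝ)} := pos_iff_ne_zero.mpr h
  refine ⟨(k, 2 * Real.pi * k / τ), ⟨Set.mem_univ _, hx⟩, ?_⟩
  have hk' : (k : ℝ) ≠ 0 := Int.cast_ne_zero.mpr hk
  have hπ : Real.pi ≠ 0 := Real.pi_ne_zero
  have hτ0 : τ ≠ 0 := ne_of_gt hτpos
  field_simp

lemma stmt0_le_integral_kern (τ : ℝ) (n : ℕ) (hn : 1 ≤ n) (ν : Measure ℝ)
    [IsFiniteMeasure ν] : (ν {0}).toReal ≤ ∫ s, stmt0Kern τ n s ∂ν := by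
  rw [← measureReal_def, ← integral_indicator_one (measurableSet_singleton (0:ℝ)) (μ := ν)]
  refine integral_mono
    ((integrable_const (1:ℝ)).indicator (measurableSet_singleton (0:ℝ)))
    (stmt0_integrable_kern τ n ν) ?_
  intro s
  by_cases hs : s = (0:ℝ)
  · subst hs
    rw [Set.indicator_of_mem (Set.mem_singleton _)]
    rw [stmt0Kern_of_one τ 0 n hn (by simp)]
    simp
  · rw [Set.indicator_of_notMem (by simp [hs])]
    exact stmt0Kern_nonneg τ n s

end stmt0Aux



/- STATEMENT 0: If the spectral measures μ_{Ψ,Λ} of self-adjoint operators A_Λ at a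
vector Ψ have characteristic functions converging pointwise to those of the spectral
measure μ_Ψ of A at Ψ (i.e. ⟨Ψ, e^{itA_Λ}Ψ⟩ → ⟨Ψ, e^{itA}Ψ⟩ for all t), and
⟨Ψ, P_Λ Ψ⟩ = μ_{Ψ,Λ}({0}) ≥ μ_Ψ({0}) = ⟨Ψ, P Ψ⟩ for all Λ, then
lim_Λ ⟨Ψ, P_Λ Ψ⟩ = ⟨Ψ, P Ψ⟩.  The (possibly unbounded) self-adjoint operators are
represented by their spectral measures at Ψ, which are finite Borel measures on ℝ of
total mass ‖Ψ‖². -/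
open MeasureTheory Filter Topology in
theorem stmt0 {H : Type*} [NormedAddCommGroup H] [InnerProductSpace ℂ H]
    (Ψ : H) {ι : Type*} (l : Filter ι) [l.NeBot]
    (μΛ : ι → Measure ℝ) (μ : Measure ℝ)
    [∀ i, IsFiniteMeasure (μΛ i)] [IsFiniteMeasure μ]
    -- spectral measures at Ψ have total mass ‖Ψ‖²
    (hmassΛ : ∀ i, (μΛ i) Set.univ = ENNReal.ofReal (‖Ψ‖ ^ 2))
    (hmass : μ Set.univ = ENNReal.ofReal (‖Ψ‖ ^ 2))
    -- ⟨Ψ, e^{itA_Λ} Ψ⟩ → ⟨Ψ, e^{itA} Ψ⟩ for every t ∈ ℝ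
    (hchar : ∀ t : ℝ,
      Tendsto (fun i => ∫ s : ℝ, Complex.exp (Complex.I * t * s) ∂(μΛ i)) l
        (𝓝 (∫ s : ℝ, Complex.exp (Complex.I * t * s) ∂μ)))
    -- ⟨Ψ, P_Λ Ψ⟩ ≥ ⟨Ψ, P Ψ⟩, i.e. μ_{Ψ,Λ}({0}) ≥ μ_Ψ({0})
    (hge : ∀ i, μ {0} ≤ (μΛ i) {0}) :
    Tendsto (fun i => (μΛ i) {0}) l (𝓝 (μ {0})) := by

  have hμtop : μ {0} ≠ ⊤ := measure_ne_top μ _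
  have hΛtop : ∀ i, (μΛ i) {0} ≠ ⊤ := fun i => measure_ne_top _ _
  set a : ℝ := (μ {0}).toReal with ha
  have hgeR : ∀ i, a ≤ ((μΛ i) {0}).toReal := fun i =>
    (ENNReal.toReal_le_toReal hμtop (hΛtop i)).mpr (hge i)
  have hreal : Tendsto (fun i => ((μΛ i) {0}).toReal) l (𝓝 a) := by
    rw [Metric.tendsto_nhds]
    intro ε hε
    obtain ⟨τ, hτpos, hatoms⟩ := stmt0_exists_tau μ
    have hDCT := stmt0_tendsto_integral_kern μ τ (ne_of_gt hτpos) hatoms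
    have hev : ∀ᶠ n in atTop, ∫ s, stmt0Kern τ n s ∂μ < a + ε / 2 :=
      hDCT.eventually_lt_const (by rw [← ha]; linarith)
    obtain ⟨n, hnint, hn1⟩ := (hev.and (eventually_ge_atTop 1)).exists
    have hconv : Tendsto (fun i => ∫ s, stmt0Kern τ n s ∂(μΛ i)) l
        (𝓝 (∫ s, stmt0Kern τ n s ∂μ)) := by
      have h1 : (fun i => ∫ s, stmt0Kern τ n s ∂(μΛ i)) = fun i =>
          (∑ j ∈ Finset.range n, ∑ k ∈ Finset.range n,
            (∫ s : ℝ, Complex.exp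
              (Complex.I * ((((j : ℝ) - (k : ℝ)) * τ : ℝ) : ℂ) * (s : ℂ)) ∂(μΛ i)).re)
            / (n : ℝ) ^ 2 := funext fun i => stmt0Kern_integral τ n (μΛ i)
      rw [h1, stmt0Kern_integral τ n μ]
      apply Tendsto.div_const
      refine tendsto_finset_sum _ fun j _ => tendsto_finset_sum _ fun k _ => ?_
      exact (Complex.continuous_re.tendsto _).comp (hchar _)
    have hev2 : ∀ᶠ i in l, ∫ s, stmt0Kern τ n s ∂(μΛ i) < a + ε :=
      hconv.eventually_lt_const (by linarith)
    filter_upwards [hev2] with i hi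
    rw [Real.dist_eq, abs_sub_lt_iff]
    have hle := stmt0_le_integral_kern τ n hn1 (μΛ i)
    constructor
    · linarith
    · linarith [hgeR i]
  have h2 : Tendsto (fun i => ENNReal.ofReal (((μΛ i) {0}).toReal)) l
      (𝓝 (ENNReal.ofReal a)) := ENNReal.tendsto_ofReal hreal
  rw [ha, ENNReal.ofReal_toReal hμtop] at h2
  exact h2.congr fun i => ENNReal.ofReal_toReal (hΛtop i)
end

section
/- Let (f_Λ) be a net of X-valued functions, each bounded, continuous on the closed strip S = {|Im z| ≤ 1/2} and analytic in its interior, with a uniform bound sup_Λ sup_{z∈S} ‖f_Λ(z)‖ < ∞. If f_Λ(θ ± i/2) → 0 uniformly for θ in compact subsets of ℝ, and f_Λ(z) = e^{−z²} g_Λ(z) with sup_Λ sup_{θ∈ℝ} ‖g_Λ(θ ± i/2)‖ < ∞, then f_Λ → 0 uniformly on the whole closed strip S. -/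
/- STATEMENT 9: Let (f_Λ) be a net of X-valued functions, each bounded, continuous
on the closed strip S = {|Im z| ≤ 1/2} and analytic in its interior, with a uniform
bound on S.  If f_Λ(θ ± i/2) → 0 uniformly for θ in compacts of ℝ, and
f_Λ(z) = e^{−z²} g_Λ(z) on S with sup_Λ sup_θ ‖g_Λ(θ ± i/2)‖ < ∞, then f_Λ → 0
uniformly on the whole closed strip S. -/
open Filter Topology in
theorem stmt9 {X : Type*} [NormedAddCommGroup X] [NormedSpace ℂ X]
    {ι : Type*} (l : Filter ι) [l.NeBot]
    (f g : ι → ℂ → X)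
    (hcont : ∀ i, ContinuousOn (f i) {z : ℂ | |z.im| ≤ 1/2})
    (hanal : ∀ i, DifferentiableOn ℂ (f i) {z : ℂ | |z.im| < 1/2})
    (hbdd : ∃ M : ℝ, ∀ i, ∀ z ∈ {z : ℂ | |z.im| ≤ 1/2}, ‖f i z‖ ≤ M)
    (hbndryup : ∀ K : Set ℝ, IsCompact K →
      TendstoUniformlyOn (fun i (θ : ℝ) => f i ((θ : ℂ) + Complex.I / 2)) (fun _ => 0) l K)
    (hbndrydown : ∀ K : Set ℝ, IsCompact K →
      TendstoUniformlyOn (fun i (θ : ℝ) => f i ((θ : ℂ) - Complex.I / 2)) (fun _ => 0) l K)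
    (hfg : ∀ i, ∀ z ∈ {z : ℂ | |z.im| ≤ 1/2}, f i z = Complex.exp (-z ^ 2) • g i z)
    (hgbdd : ∃ M : ℝ, ∀ i, ∀ θ : ℝ,
      ‖g i (θ + Complex.I / 2)‖ ≤ M ∧ ‖g i (θ - Complex.I / 2)‖ ≤ M) :
    TendstoUniformlyOn (fun i z => f i z) (fun _ => 0) l {z : ℂ | |z.im| ≤ 1/2} := by
  obtain ⟨M, hM⟩ := hbdd
  obtain ⟨Mg, hMg⟩ := hgbdd
  set Mg' : ℝ := max Mg 0 with hMg'def
  have hMg'0 : 0 ≤ Mg' := le_max_right _ _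
  have hMg' : ∀ i, ∀ θ : ℝ,
      ‖g i (θ + Complex.I / 2)‖ ≤ Mg' ∧ ‖g i (θ - Complex.I / 2)‖ ≤ Mg' := fun i θ =>
    ⟨(hMg i θ).1.trans (le_max_left _ _), (hMg i θ).2.trans (le_max_left _ _)⟩
  rw [Metric.tendstoUniformlyOn_iff]
  intro ε hε
  -- choose R with exp(1/4 - R²)·(Mg'+1) < ε/2 and R ≥ 0
  have htend : Filter.Tendsto (fun R : ℝ => Real.exp (1/4 - R^2) * (Mg' + 1))
      Filter.atTop (nhds 0) := by
    have : Filter.Tendsto (fun R : ℝ => (1/4 : ℝ) - R^2) Filter.atTop Filter.atBot := by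
      apply Filter.tendsto_atBot_add_const_left
      exact tendsto_neg_atTop_atBot.comp (tendsto_pow_atTop two_ne_zero)
    simpa using ((Real.tendsto_exp_atBot.comp this).mul_const (Mg' + 1))
  obtain ⟨R, hR0, hRε⟩ : ∃ R : ℝ, 0 ≤ R ∧ Real.exp (1/4 - R^2) * (Mg' + 1) < ε/2 := by
    have h1 := htend.eventually (eventually_lt_nhds (show (0:ℝ) < ε/2 by linarith))
    obtain ⟨R, hR⟩ := (h1.and (Filter.eventually_ge_atTop (0:ℝ))).exists
    exact ⟨R, hR.2, hR.1⟩
  -- eventual smallness on the compact part of the boundary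
  have hK : IsCompact (Set.Icc (-R) R) := isCompact_Icc
  have hup := (Metric.tendstoUniformlyOn_iff.1 (hbndryup _ hK)) (ε/2) (by linarith)
  have hdown := (Metric.tendstoUniformlyOn_iff.1 (hbndrydown _ hK)) (ε/2) (by linarith)
  filter_upwards [hup, hdown] with i hui hdi z hzmem
  have hz : |z.im| ≤ 1/2 := hzmem
  -- boundary bound: ‖f i w‖ ≤ ε/2 for w on either boundary line
  have key : ∀ w : ℂ, w.im = 1/2 ∨ w.im = -(1/2) → ‖f i w‖ ≤ ε/2 := by
    intro w hw
    have hwS : w ∈ {z : ℂ | |z.im| ≤ 1/2} := by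
      rcases hw with h | h <;> simp [Set.mem_setOf_eq, h, abs_of_nonneg, abs_of_nonpos]
    set θ : ℝ := w.re with hθ
    have hwrite : w = (θ : ℂ) + w.im * Complex.I := by
      apply Complex.ext <;> simp [hθ]
    by_cases hθR : |θ| ≤ R
    · -- compact part
      have hθmem : θ ∈ Set.Icc (-R) R := abs_le.1 hθR
      rcases hw with h | h
      · have := hui θ hθmem
        have hw2 : w = (θ : ℂ) + Complex.I / 2 := by
          apply Complex.ext <;> simp [h, hθ]
        rw [hw2]
        simpa [dist_eq_norm] using this.le
      · have := hdi θ hθmem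
        have hw2 : w = (θ : ℂ) - Complex.I / 2 := by
          apply Complex.ext <;> simp [h, hθ]
        rw [hw2]
        simpa [dist_eq_norm] using this.le
    · -- tail: use gaussian decay
      push_neg at hθR
      have hgw : ‖g i w‖ ≤ Mg' := by
        rcases hw with h | h
        · have hw2 : w = (θ : ℂ) + Complex.I / 2 := by
            apply Complex.ext <;> simp [h, hθ]
          rw [hw2]; exact (hMg' i θ).1
        · have hw2 : w = (θ : ℂ) - Complex.I / 2 := by
            apply Complex.ext <;> simp [h, hθ]
          rw [hw2]; exact (hMg' i θ).2
      have hre : (-(w^2)).re = 1/4 - θ^2 := by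
        have him2 : w.im * w.im = 1/4 := by
          rcases hw with h | h <;> rw [h] <;> norm_num
        simp only [pow_two, Complex.neg_re, Complex.mul_re]
        have : θ = w.re := rfl
        nlinarith [him2]
      calc ‖f i w‖ = ‖Complex.exp (-(w^2))‖ * ‖g i w‖ := by
            rw [hfg i w hwS]; simp [norm_smul]
        _ = Real.exp (1/4 - θ^2) * ‖g i w‖ := by rw [Complex.norm_exp, hre]
        _ ≤ Real.exp (1/4 - R^2) * (Mg' + 1) := by
            apply mul_le_mul
            · apply Real.exp_le_exp.2
              have : R^2 ≤ θ^2 := by nlinarith [abs_nonneg θ, sq_abs θ, hθR.le]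
              linarith
            · linarith [hgw]
            · exact norm_nonneg _
            · positivity
        _ ≤ ε/2 := hRε.le
  -- Phragmén–Lindelöf on the strip
  have hPL : ‖f i z‖ ≤ ε/2 := by
    have hopen : {w : ℂ | |w.im| < 1/2} = Complex.im ⁻¹' Set.Ioo (-(1/2)) (1/2) := by
      ext w; simp [abs_lt, Set.mem_preimage, and_comm]
    have hclosed : {w : ℂ | |w.im| ≤ 1/2} = Complex.im ⁻¹' Set.Icc (-(1/2)) (1/2) := by
      ext w; simp [abs_le, Set.mem_preimage]
    apply PhragmenLindelof.horizontal_strip (a := -(1/2)) (b := 1/2) (f := f i)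
    · refine ⟨hanal i |>.mono ?_, (hcont i).mono ?_⟩
      · rw [hopen]
      · rw [hclosed]
        exact (closure_minimal (Set.preimage_mono Set.Ioo_subset_Icc_self)
          (IsClosed.preimage Complex.continuous_im isClosed_Icc)).trans le_rfl
    · refine ⟨0, by positivity, 0, ?_⟩
      rw [Asymptotics.isBigO_iff]
      refine ⟨M, Filter.eventually_inf_principal.2 (Filter.Eventually.of_forall fun w hw => ?_)⟩
      simp only [Set.mem_preimage, Set.mem_Ioo] at hw
      have hwS2 : w ∈ {z : ℂ | |z.im| ≤ 1/2} := by
        simp only [Set.mem_setOf_eq, abs_le]; constructor <;> linarith [hw.1, hw.2]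
      simpa using (hM i w hwS2)
    · intro w hw; exact key w (Or.inr hw)
    · intro w hw; exact key w (Or.inl hw)
    · linarith [(abs_le.1 hz).1]
    · exact (abs_le.1 hz).2
  calc dist ((fun _ => (0:X)) z) (f i z) = ‖f i z‖ := by simp [dist_eq_norm]
    _ ≤ ε/2 := hPL
    _ < ε := by linarith
end

section
/- Let O be a finite-dimensional C*-algebra (matrix algebra), ω a faithful state on O with density matrix ρ, and V = V* ∈ O. Define σ = i[log ρ, V] and ω_s(A) = ω(e^{isH}Ae^{−isH}) for a self-adjoint H with e^{isH}, generating dynamics τ^s. Then the relative entropy satisfies Ent(ω_s | ω) = −∫_0^s ω_t(σ) dt, where Ent(ν|ω) = tr(ν(log ρ_ω − log ρ_ν)) and σ is the entropy production observable, provided ω is invariant under the dynamics generated by H − V (i.e., [H − V, ρ] = 0). -/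
open NormedSpace Matrix

private lemma aux_comm {N : ℕ} {X L : Matrix (Fin N) (Fin N) ℂ} (hL : L.IsHermitian)
    (h : X * exp L = exp L * X) : X * L = L * X := by
  classical
  set U : Matrix (Fin N) (Fin N) ℂ := (hL.eigenvectorUnitary : Matrix (Fin N) (Fin N) ℂ) with hUdef
  have hU1 : U * star U = 1 := Matrix.mem_unitaryGroup_iff.mp hL.eigenvectorUnitary.2
  have hU2 : star U * U = 1 := Matrix.mem_unitaryGroup_iff'.mp hL.eigenvectorUnitary.2
  set d : Fin N → ℝ := hL.eigenvalues with hd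
  set D : Matrix (Fin N) (Fin N) ℂ := Matrix.diagonal (fun i => (d i : ℂ)) with hDdef
  have hLD : L = U * D * star U := by
    have h0 := hL.spectral_theorem
    simp [hDdef, Function.comp] at h0
    exact h0
  have hUunit : IsUnit U := ⟨⟨U, star U, hU1, hU2⟩, rfl⟩
  have hUinv : U⁻¹ = star U := Matrix.inv_eq_right_inv hU1
  have hexpL : exp L = U * exp D * star U := by
    rw [hLD, ← hUinv, Matrix.exp_conj U D hUunit, hUinv]
  have hexpD : exp D = Matrix.diagonal (fun i => Complex.exp (d i)) := by
    rw [hDdef, Matrix.exp_diagonal]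
    have hfun : (exp fun i => ((d i : ℂ))) = fun i => Complex.exp (d i) := by
      funext i
      have := map_exp (Pi.evalRingHom (fun _ : Fin N => ℂ) i) (continuous_apply i)
        (fun j => ((d j : ℂ)))
      simp only [← Complex.exp_eq_exp_ℂ] at this ⊢
      exact this
    rw [hfun]
  have e1 : ∀ A : Matrix (Fin N) (Fin N) ℂ, U * (star U * A) = A := fun A => by
    rw [← Matrix.mul_assoc, hU1, Matrix.one_mul]
  have e2 : ∀ A : Matrix (Fin N) (Fin N) ℂ, star U * (U * A) = A := fun A => by
    rw [← Matrix.mul_assoc, hU2, Matrix.one_mul]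
  set Y : Matrix (Fin N) (Fin N) ℂ := star U * X * U with hY
  have hcomm : Y * exp D = exp D * Y := by
    have h0 : X * (U * exp D * star U) = (U * exp D * star U) * X := by
      rw [← hexpL]; exact h
    have h' := congrArg (fun A => star U * A * U) h0
    simpa [hY, Matrix.mul_assoc, e1, e2, hU1, hU2, Matrix.mul_one] using h'
  have hent : ∀ i j, Y i j * Complex.exp (d j) = Complex.exp (d i) * Y i j := by
    intro i j
    have h0 : Y * Matrix.diagonal (fun i => Complex.exp (d i))
        = Matrix.diagonal (fun i => Complex.exp (d i)) * Y := by rw [← hexpD]; exact hcomm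
    have := congrFun (congrFun h0 i) j
    simpa [Matrix.mul_diagonal, Matrix.diagonal_mul] using this
  have hYD : Y * D = D * Y := by
    ext i j
    simp only [hDdef, Matrix.mul_diagonal, Matrix.diagonal_mul]
    by_cases hz : Y i j = 0
    · simp [hz]
    · have h0 := hent i j
      rw [mul_comm (Y i j)] at h0
      have hde : Complex.exp (d j) = Complex.exp (d i) := mul_right_cancel₀ hz h0
      have hdr : d j = d i := by
        have : ((Real.exp (d j) : ℂ)) = (Real.exp (d i) : ℂ) := by
          rw [Complex.ofReal_exp, Complex.ofReal_exp]; exact hde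
        exact Real.exp_injective (by exact_mod_cast this)
      rw [hdr, mul_comm]
  have hXU : X = U * Y * star U := by
    rw [hY]
    simp [Matrix.mul_assoc, e1, e2, hU1, hU2, Matrix.mul_one]
  calc X * L = U * Y * star U * (U * D * star U) := by rw [← hXU, ← hLD]
    _ = U * (Y * (D * star U)) := by simp only [Matrix.mul_assoc, e2]
    _ = U * (D * (Y * star U)) := by rw [← Matrix.mul_assoc Y, hYD, Matrix.mul_assoc]
    _ = (U * D * star U) * (U * Y * star U) := by simp only [Matrix.mul_assoc, e2]
    _ = L * X := by rw [← hXU, ← hLD]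

private lemma aux_inv {N : ℕ} (A : Matrix (Fin N) (Fin N) ℂ) :
    exp A * exp (-A) = 1 ∧ exp (-A) * exp A = 1 := by
  letI : SeminormedRing (Matrix (Fin N) (Fin N) ℂ) := Matrix.linftyOpSemiNormedRing
  letI : NormedRing (Matrix (Fin N) (Fin N) ℂ) := Matrix.linftyOpNormedRing
  letI : NormedAlgebra ℂ (Matrix (Fin N) (Fin N) ℂ) := Matrix.linftyOpNormedAlgebra
  letI : CompleteSpace (Matrix (Fin N) (Fin N) ℂ) := FiniteDimensional.complete ℂ _
  have h1 : exp A * exp (-A) = 1 := by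
    have := (Matrix.exp_add_of_commute A (-A) ((Commute.refl A).neg_right)).symm
    rwa [add_neg_cancel, exp_zero] at this
  have h2 : exp (-A) * exp A = 1 := by
    have := (Matrix.exp_add_of_commute (-A) A ((Commute.refl A).neg_left)).symm
    rwa [neg_add_cancel, exp_zero] at this
  exact ⟨h1, h2⟩

private lemma aux_deriv {N : ℕ} (A C B : Matrix (Fin N) (Fin N) ℂ) (t : ℝ) :
    HasDerivAt (fun u : ℝ => Matrix.trace (A * (exp (u • B) * C * exp (-(u • B)))))
      (Matrix.trace (A * (exp (t • B) * (B * C - C * B) * exp (-(t • B))))) t := by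
  letI : SeminormedRing (Matrix (Fin N) (Fin N) ℂ) := Matrix.linftyOpSemiNormedRing
  letI : NormedRing (Matrix (Fin N) (Fin N) ℂ) := Matrix.linftyOpNormedRing
  letI : NormedAlgebra ℂ (Matrix (Fin N) (Fin N) ℂ) := Matrix.linftyOpNormedAlgebra
  letI : NormedAlgebra ℝ (Matrix (Fin N) (Fin N) ℂ) := Matrix.linftyOpNormedAlgebra
  letI : CompleteSpace (Matrix (Fin N) (Fin N) ℂ) := FiniteDimensional.complete ℂ _
  letI : FiniteDimensional ℝ (Matrix (Fin N) (Fin N) ℂ) := Module.Finite.trans ℂ _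
  have hE : HasDerivAt (fun u : ℝ => exp (u • B)) (exp (t • B) * B) t := by
    have h0 := hasDerivAt_exp_smul_const (𝕂 := ℝ) B t
    exact h0
  have hF : HasDerivAt (fun u : ℝ => exp (-(u • B))) (-(exp (-(t • B)) * B)) t := by
    have h0 := hasDerivAt_exp_smul_const (𝕂 := ℝ) (-B) t
    simp only [smul_neg] at h0
    simp only [mul_neg] at h0
    exact h0
  have hm := (hE.mul_const C).mul hF
  let f : Matrix (Fin N) (Fin N) ℂ →ₗ[ℂ] ℂ :=
    (Matrix.traceLinearMap (Fin N) ℂ ℂ).comp (LinearMap.mulLeft ℂ A)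
  let fc : Matrix (Fin N) (Fin N) ℂ →L[ℝ] ℂ :=
    LinearMap.toContinuousLinearMap (f.restrictScalars ℝ)
  have h2 := fc.hasFDerivAt.comp_hasDerivAt t hm
  have hFB : exp (-(t • B)) * B = B * exp (-(t • B)) :=
    (((Commute.refl B).smul_right t).neg_right.exp_right).eq.symm
  have hval : exp (t • B) * B * C * exp (-(t • B))
        + exp (t • B) * C * -(exp (-(t • B)) * B)
      = exp (t • B) * (B * C - C * B) * exp (-(t • B)) := by
    rw [hFB]; noncomm_ring
  have h3 : HasDerivAt (fun u : ℝ => Matrix.trace (A * (exp (u • B) * C * exp (-(u • B)))))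
      (fc (exp (t • B) * B * C * exp (-(t • B))
        + exp (t • B) * C * -(exp (-(t • B)) * B))) t := h2
  rw [show fc (exp (t • B) * B * C * exp (-(t • B))
        + exp (t • B) * C * -(exp (-(t • B)) * B))
      = Matrix.trace (A * (exp (t • B) * (B * C - C * B) * exp (-(t • B)))) from by
    rw [← hval]; rfl] at h3
  exact h3

private lemma aux_cont {N : ℕ} (A C B : Matrix (Fin N) (Fin N) ℂ) :
    Continuous (fun u : ℝ => Matrix.trace (A * (exp (u • B) * C * exp (-(u • B))))) := by
  letI : SeminormedRing (Matrix (Fin N) (Fin N) ℂ) := Matrix.linftyOpSemiNormedRing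
  letI : NormedRing (Matrix (Fin N) (Fin N) ℂ) := Matrix.linftyOpNormedRing
  letI : NormedAlgebra ℂ (Matrix (Fin N) (Fin N) ℂ) := Matrix.linftyOpNormedAlgebra
  letI : NormedAlgebra ℝ (Matrix (Fin N) (Fin N) ℂ) := Matrix.linftyOpNormedAlgebra
  letI : CompleteSpace (Matrix (Fin N) (Fin N) ℂ) := FiniteDimensional.complete ℂ _
  letI : FiniteDimensional ℝ (Matrix (Fin N) (Fin N) ℂ) := Module.Finite.trans ℂ _
  have cE : Continuous (fun u : ℝ => exp (u • B)) := by
    refine continuous_iff_continuousAt.mpr fun t => ?_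
    have h0 := hasDerivAt_exp_smul_const (𝕂 := ℝ) B t
    exact h0.continuousAt
  have cF : Continuous (fun u : ℝ => exp (-(u • B))) := by
    refine continuous_iff_continuousAt.mpr fun t => ?_
    have h0 := hasDerivAt_exp_smul_const (𝕂 := ℝ) (-B) t
    simp only [smul_neg] at h0
    exact h0.continuousAt
  let f : Matrix (Fin N) (Fin N) ℂ →ₗ[ℂ] ℂ :=
    (Matrix.traceLinearMap (Fin N) ℂ ℂ).comp (LinearMap.mulLeft ℂ A)
  let fc : Matrix (Fin N) (Fin N) ℂ →L[ℝ] ℂ :=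
    LinearMap.toContinuousLinearMap (f.restrictScalars ℝ)
  exact fc.continuous.comp ((cE.mul continuous_const).mul cF)



/- STATEMENT 19: Finite-dimensional entropy balance equation.  Let O = B(ℂ^N), ω a
faithful state with density matrix ρ > 0 (tr ρ = 1), L = log ρ (i.e. exp L = ρ, L
Hermitian), V = V*, H self-adjoint generating the dynamics τ^s(A) = e^{isH}Ae^{−isH},
with the invariance [H − V, ρ] = 0.  Put σ = i[log ρ, V] and U(t) = e^{itH}.  The
state ω_s = ω∘τ^s has density ρ_s = U(−s) ρ U(s) and log ρ_s = U(−s) L U(s), so the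
relative entropy Ent(ω_s|ω) = tr(ρ_s(log ρ − log ρ_s)) satisfies
Ent(ω_s|ω) = −∫_0^s ω_t(σ) dt, where ω_t(σ) = tr(ρ U(t) σ U(−t)). -/
open NormedSpace ComplexOrder in
theorem stmt19 {N : ℕ} (ρ Hm V L : Matrix (Fin N) (Fin N) ℂ)
    (hρpos : ρ.PosDef) (hρtr : ρ.trace = 1)
    (hHm : Hm.IsHermitian) (hV : V.IsHermitian) (hL : L.IsHermitian)
    (hlog : exp L = ρ)
    (hinv : (Hm - V) * ρ = ρ * (Hm - V))
    (s : ℝ) :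
    Matrix.trace
      ((exp ((-(Complex.I * s)) • Hm) * ρ * exp ((Complex.I * s) • Hm)) *
        (L - exp ((-(Complex.I * s)) • Hm) * L * exp ((Complex.I * s) • Hm)))
    = - ∫ t in (0:ℝ)..s,
        Matrix.trace (ρ *
          (exp ((Complex.I * t) • Hm) * (Complex.I • (L * V - V * L)) *
            exp ((-(Complex.I * t)) • Hm))) := by
  classical
  set B : Matrix (Fin N) (Fin N) ℂ := Complex.I • Hm with hBdef
  set sg : Matrix (Fin N) (Fin N) ℂ := Complex.I • (L * V - V * L) with hsgdef
  have hB : ∀ t : ℝ, (Complex.I * (t : ℂ)) • Hm = t • B := fun t => by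
    rw [hBdef, mul_comm, ← Complex.real_smul, smul_assoc]
  have hB' : ∀ t : ℝ, (-(Complex.I * (t : ℂ))) • Hm = -(t • B) := fun t => by
    rw [neg_smul, hB]
  simp only [hB, hB']
  have h1 : (Hm - V) * L = L * (Hm - V) := aux_comm hL (by rw [hlog]; exact hinv)
  have hcomm : Hm * L - L * Hm = V * L - L * V := by
    have h2 : Hm * L - L * Hm - (V * L - L * V) = (Hm - V) * L - L * (Hm - V) := by noncomm_ring
    have h3 : Hm * L - L * Hm - (V * L - L * V) = 0 := by rw [h2, h1, sub_self]
    exact sub_eq_zero.mp h3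
  have hBL : B * L - L * B = -sg := by
    rw [hBdef, hsgdef, smul_mul_assoc, mul_smul_comm, ← smul_sub, hcomm, ← smul_neg, neg_sub]
  have hg : ∀ x : ℝ,
      HasDerivAt (fun u : ℝ => Matrix.trace (ρ * (exp (u • B) * L * exp (-(u • B)))))
        (-(Matrix.trace (ρ * (exp (x • B) * sg * exp (-(x • B)))))) x := by
    intro x
    have h0 := aux_deriv ρ L B x
    rw [hBL] at h0
    rw [show exp (x • B) * -sg * exp (-(x • B))
        = -(exp (x • B) * sg * exp (-(x • B))) from by noncomm_ring,
      Matrix.mul_neg, Matrix.trace_neg] at h0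
    exact h0
  have hcont := aux_cont ρ sg B
  have hFTC := intervalIntegral.integral_eq_sub_of_hasDerivAt (a := (0:ℝ)) (b := s)
    (fun x _ => hg x) ((hcont.neg).intervalIntegrable 0 s)
  rw [intervalIntegral.integral_neg] at hFTC
  rw [hFTC]
  beta_reduce
  obtain ⟨hEF, hFE⟩ := aux_inv ((s : ℝ) • B)
  have hg0 : Matrix.trace (ρ * (exp ((0 : ℝ) • B) * L * exp (-((0 : ℝ) • B)))) =
      Matrix.trace (ρ * L) := by
    simp [exp_zero]
  rw [hg0]
  have hexpand : (exp (-(s • B)) * ρ * exp (s • B)) *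
        (L - exp (-(s • B)) * L * exp (s • B))
      = exp (-(s • B)) * (ρ * (exp (s • B) * L))
        - exp (-(s • B)) * (ρ * ((exp (s • B) * exp (-(s • B))) * (L * exp (s • B)))) := by
    noncomm_ring
  rw [hexpand, hEF, Matrix.one_mul, Matrix.trace_sub,
    Matrix.trace_mul_comm (exp (-(s • B))) (ρ * (exp (s • B) * L)),
    Matrix.trace_mul_comm (exp (-(s • B))) (ρ * (L * exp (s • B))),
    show (ρ * (exp (s • B) * L)) * exp (-(s • B))
      = ρ * (exp (s • B) * L * exp (-(s • B))) from by noncomm_ring,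
    show (ρ * (L * exp (s • B))) * exp (-(s • B))
      = ρ * (L * (exp (s • B) * exp (-(s • B)))) from by noncomm_ring,
    hEF, Matrix.mul_one]
end
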